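/- Fix positive integers n and w, a probability space Ω, and a random hash function h : Ω → (Fin n → Fin w) that is pairwise uniform, i.e., for all distinct i, i' ∈ Fin n, P(h(i) = h(i')) ≤ 1/w. Let y ∈ ℝ^n have nonnegative entries, fix a coordinate i, and let η > 0. Then P( Σ_{i' : h(i') = h(i)} y_{i'} > y_i + η·‖y‖₁ ) ≤ 1/(w·η). In particular, if w ≥ e/η, this failure probability is at most 1/e. -/

import Mathlib

open Finset MeasureTheory ProbabilityTheory
open scoped ENNReal

/-- Markov-type bound for a single row of a count-min sketch: for a pairwise
uniform random hash `h` and nonnegative `y`, the cell containing coordinate `i`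
exceeds `y i + η‖y‖₁` with probability at most `1/(wη)`; in particular at most
`1/e` whenever `w ≥ e/η`. -/
theorem cm_cell_tail_bound
    (n w : ℕ) (hn : 0 < n) (hw : 0 < w)
    {Ω : Type*} [MeasureSpace Ω] [IsProbabilityMeasure (ℙ : Measure Ω)]
    (h : Ω → Fin n → Fin w) (hmeas : Measurable h)
    (hpair : ∀ i i' : Fin n, i ≠ i' → ℙ {ω | h ω i = h ω i'} ≤ 1 / w)
    (y : Fin n → ℝ) (hy : ∀ i, 0 ≤ y i) (i : Fin n) (η : ℝ) (hη : 0 < η) :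
    ℙ {ω | (∑ i' ∈ Finset.univ.filter (fun i' => h ω i' = h ω i), y i')
            > y i + η * ∑ i', y i'}
        ≤ ENNReal.ofReal (1 / (w * η)) ∧
    (Real.exp 1 / η ≤ w →
      ℙ {ω | (∑ i' ∈ Finset.univ.filter (fun i' => h ω i' = h ω i), y i')
              > y i + η * ∑ i', y i'}
          ≤ ENNReal.ofReal (1 / Real.exp 1)) := by
  set S := ∑ i', y i' with hS
  have hS0 : 0 ≤ S := Finset.sum_nonneg fun j _ => hy j
  have key : ℙ {ω | (∑ i' ∈ Finset.univ.filter (fun i' => h ω i' = h ω i), y i')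
            > y i + η * S} ≤ ENNReal.ofReal (1 / (w * η)) := by
    rcases eq_or_lt_of_le hS0 with hS0' | hSpos
    · -- S = 0 : all y are 0, the event is empty
      have hyz : ∀ j, y j = 0 := by
        intro j
        have := (Finset.sum_eq_zero_iff_of_nonneg (fun j _ => hy j)).mp hS0'.symm
        exact this j (mem_univ j)
      have hE : {ω : Ω | (∑ i' ∈ Finset.univ.filter (fun i' => h ω i' = h ω i), y i')
            > y i + η * S} = ∅ := by
        ext ω
        simp [hyz, ← hS0']
      rw [hE]; simp
    · -- main case
      have hmeasE : ∀ i' : Fin n, MeasurableSet {ω : Ω | h ω i' = h ω i} := fun i' =>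
        measurableSet_eq_fun ((measurable_pi_apply i').comp hmeas)
          ((measurable_pi_apply i).comp hmeas)
      set g : Ω → ℝ≥0∞ := fun ω => ∑ i' ∈ Finset.univ.erase i,
        Set.indicator {ω : Ω | h ω i' = h ω i} (fun _ => ENNReal.ofReal (y i')) ω with hg
      have hgmeas : Measurable g :=
        Finset.measurable_sum _ fun i' _ => (measurable_const.indicator (hmeasE i'))
      -- pointwise identity
      have hgval : ∀ ω, g ω = ENNReal.ofReal
          (∑ i' ∈ ((Finset.univ.filter (fun i' => h ω i' = h ω i)).erase i), y i') := by
        intro ω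
        rw [hg, ENNReal.ofReal_sum_of_nonneg (fun j _ => hy j)]
        rw [show ((Finset.univ.filter (fun i' => h ω i' = h ω i)).erase i)
            = (Finset.univ.erase i).filter (fun i' => h ω i' = h ω i) by
          ext j; simp [and_comm]]
        rw [Finset.sum_filter]
        refine Finset.sum_congr rfl fun j hj => ?_
        rw [Set.indicator_apply]
        simp only [Set.mem_setOf_eq]
      -- integral bound
      have hint : ∫⁻ ω, g ω ≤ ENNReal.ofReal S / w := by
        calc ∫⁻ ω, g ω
            = ∑ i' ∈ Finset.univ.erase i, ∫⁻ ω,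
              Set.indicator {ω : Ω | h ω i' = h ω i} (fun _ => ENNReal.ofReal (y i')) ω := by
              exact lintegral_finset_sum _ fun i' _ => measurable_const.indicator (hmeasE i')
          _ = ∑ i' ∈ Finset.univ.erase i,
              ENNReal.ofReal (y i') * ℙ {ω : Ω | h ω i' = h ω i} := by
              refine Finset.sum_congr rfl fun i' _ => ?_
              rw [lintegral_indicator (hmeasE i'), lintegral_const,
                Measure.restrict_apply MeasurableSet.univ, Set.univ_inter]
          _ ≤ ∑ i' ∈ Finset.univ.erase i, ENNReal.ofReal (y i') * (1 / w) := by
              refine Finset.sum_le_sum fun i' hi' => ?_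
              refine mul_le_mul_right ?_ _
              exact hpair i' i (Finset.ne_of_mem_erase hi')
          _ = (∑ i' ∈ Finset.univ.erase i, ENNReal.ofReal (y i')) / w := by
              rw [← Finset.sum_mul, one_div, div_eq_mul_inv]
          _ ≤ ENNReal.ofReal S / w := by
              refine ENNReal.div_le_div_right ?_ _
              rw [hS, ENNReal.ofReal_sum_of_nonneg (fun j _ => hy j)]
              exact Finset.sum_le_sum_of_subset (Finset.erase_subset i _)
      -- Markov
      set ε : ℝ≥0∞ := ENNReal.ofReal (η * S) with hε
      have hε0 : ε ≠ 0 := by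
        simp [hε, ENNReal.ofReal_pos.2 (mul_pos hη hSpos), (ENNReal.ofReal_pos.2 (mul_pos hη hSpos)).ne']
      have hεtop : ε ≠ ∞ := ENNReal.ofReal_ne_top
      have hsub : {ω : Ω | (∑ i' ∈ Finset.univ.filter (fun i' => h ω i' = h ω i), y i')
            > y i + η * S} ⊆ {ω : Ω | ε ≤ g ω} := by
        intro ω hω
        simp only [Set.mem_setOf_eq] at hω ⊢
        rw [hgval ω, hε]
        apply ENNReal.ofReal_le_ofReal
        have hmem : i ∈ Finset.univ.filter (fun i' => h ω i' = h ω i) := by simp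
        have := Finset.add_sum_erase _ y hmem
        linarith [this]
      calc ℙ {ω : Ω | (∑ i' ∈ Finset.univ.filter (fun i' => h ω i' = h ω i), y i')
            > y i + η * S}
          ≤ ℙ {ω : Ω | ε ≤ g ω} := measure_mono hsub
        _ ≤ (∫⁻ ω, g ω) / ε := meas_ge_le_lintegral_div hgmeas.aemeasurable hε0 hεtop
        _ ≤ (ENNReal.ofReal S / w) / ε := ENNReal.div_le_div_right hint _
        _ = ENNReal.ofReal (1 / (w * η)) := by
            rw [hε, ENNReal.ofReal_mul hη.le]
            rw [ENNReal.div_eq_inv_mul, ENNReal.div_eq_inv_mul]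
            rw [ENNReal.mul_inv (Or.inr ENNReal.ofReal_ne_top) (Or.inl (by
              simp [ENNReal.ofReal_pos.2 hη, (ENNReal.ofReal_pos.2 hη).ne']))]
            rw [one_div, ENNReal.ofReal_inv_of_pos (by positivity),
              ENNReal.ofReal_mul (by positivity), ENNReal.ofReal_natCast,
              ENNReal.mul_inv (Or.inl (by simp [hw.ne'])) (Or.inl (by simp))]
            have hA0 : ENNReal.ofReal S ≠ 0 := (ENNReal.ofReal_pos.2 hSpos).ne'
            have hAt : ENNReal.ofReal S ≠ ∞ := ENNReal.ofReal_ne_top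
            have : (ENNReal.ofReal η)⁻¹ * (ENNReal.ofReal S)⁻¹ * ((↑w)⁻¹ * ENNReal.ofReal S)
                = (↑w)⁻¹ * (ENNReal.ofReal η)⁻¹ * ((ENNReal.ofReal S)⁻¹ * ENNReal.ofReal S) := by
              ring
            rw [this, ENNReal.inv_mul_cancel hA0 hAt, mul_one]
  refine ⟨key, fun hw' => key.trans ?_⟩
  apply ENNReal.ofReal_le_ofReal
  apply one_div_le_one_div_of_le (Real.exp_pos 1)
  calc Real.exp 1 = (Real.exp 1 / η) * η := by field_simp
    _ ≤ w * η := mul_le_mul_of_nonneg_right hw' hη.le
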